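/- For y > 0, α ∈ (0,1), m ≥ 1, N > 0, the derivative of f(y) = -N·y / ln(1-(1-α)^{1/(m y)}) is negative for y < ln(1-α)/(m·ln(1/2)) and positive for y > ln(1-α)/(m·ln(1/2)). -/

import Mathlib

lemma entropy_deriv_aux : ∀ x ∈ Set.Ioo (0:ℝ) 1,
    HasDerivAt (fun x : ℝ => (1-x)*Real.log (1-x) - x*Real.log x)
      (-Real.log (1-x) - Real.log x - 2) x := by
  intro x hx
  have h1 : (0:ℝ) < 1 - x := by linarith [hx.2]
  have hA : HasDerivAt (fun x : ℝ => (1-x)*Real.log (1-x)) (-(Real.log (1-x)+1)) x := by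
    have h := (Real.hasDerivAt_mul_log (x := 1-x) h1.ne').comp x
      ((hasDerivAt_id x).const_sub 1)
    simp only [Function.comp_def] at h
    exact h.congr_deriv (by ring)
  have hB : HasDerivAt (fun x : ℝ => x*Real.log x) (Real.log x + 1) x :=
    Real.hasDerivAt_mul_log hx.1.ne'
  have h := hA.sub hB
  exact h.congr_deriv (by ring)

lemma entropy_pos : ∀ u ∈ Set.Ioo (0:ℝ) (1/2),
    0 < (1-u) * Real.log (1-u) - u * Real.log u := by
  have hcont : Continuous (fun x : ℝ => (1-x) * Real.log (1-x) - x * Real.log x) := by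
    have h1 : Continuous (fun x : ℝ => (1-x) * Real.log (1-x)) :=
      Real.continuous_mul_log.comp (continuous_const.sub continuous_id)
    exact h1.sub Real.continuous_mul_log
  have hconc : StrictConcaveOn ℝ (Set.Icc (0:ℝ) (1/2))
      (fun x : ℝ => (1-x) * Real.log (1-x) - x * Real.log x) := by
    apply strictConcaveOn_of_deriv2_neg (convex_Icc _ _) hcont.continuousOn
    intro x hx
    rw [interior_Icc] at hx
    have hx1 : x ∈ Set.Ioo (0:ℝ) 1 := ⟨hx.1, by linarith [hx.2]⟩
    have h1 : (0:ℝ) < 1 - x := by linarith [hx1.2]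
    have heq : deriv (fun x : ℝ => (1-x) * Real.log (1-x) - x * Real.log x)
        =ᶠ[nhds x] (fun t : ℝ => -Real.log (1-t) - Real.log t - 2) := by
      filter_upwards [isOpen_Ioo.mem_nhds hx1] with t ht
      exact (entropy_deriv_aux t ht).deriv
    have hd2 : HasDerivAt (fun t : ℝ => -Real.log (1-t) - Real.log t - 2)
        (1/(1-x) - 1/x) x := by
      have hA : HasDerivAt (fun t : ℝ => Real.log (1-t)) (-1/(1-x)) x :=
        ((hasDerivAt_id x).const_sub 1).log h1.ne'
      have h := (hA.neg.sub (Real.hasDerivAt_log hx1.1.ne')).sub_const 2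
      exact h.congr_deriv (by ring)
    simp only [Function.iterate_succ, Function.iterate_zero, Function.comp, id]
    rw [heq.deriv_eq, hd2.deriv]
    have : 1/(1-x) < 1/x := by
      apply one_div_lt_one_div_of_lt hx.1
      linarith [hx.2]
    linarith
  intro u hu
  have h0 : (0:ℝ) ∈ Set.Icc (0:ℝ) (1/2) := by constructor <;> norm_num
  have h2 : (1/2:ℝ) ∈ Set.Icc (0:ℝ) (1/2) := by constructor <;> norm_num
  have key := hconc.2 h0 h2 (by norm_num : (0:ℝ) ≠ 1/2)
    (show (0:ℝ) < 1 - 2*u by linarith [hu.2]) (show (0:ℝ) < 2*u by linarith [hu.1])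
    (by ring)
  have harg : (1 - 2*u) • (0:ℝ) + (2*u) • (1/2:ℝ) = u := by
    simp only [smul_eq_mul]; ring
  rw [harg] at key
  have hval : (1 - 2*u) * ((1-(0:ℝ)) * Real.log (1-0) - 0 * Real.log 0)
      + 2*u * ((1-(1/2:ℝ)) * Real.log (1-(1/2:ℝ)) - (1/2) * Real.log (1/2)) = 0 := by
    norm_num
  simp only [smul_eq_mul] at key
  linarith [key, hval]

lemma entropy_neg : ∀ u ∈ Set.Ioo (1/2:ℝ) 1,
    (1-u) * Real.log (1-u) - u * Real.log u < 0 := by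
  intro u hu
  have h := entropy_pos (1-u) ⟨by linarith [hu.2], by linarith [hu.1]⟩
  have : (1-(1-u)) = u := by ring
  rw [this] at h
  linarith

/-- The derivative of f(y) = -N·y / ln(1-(1-α)^{1/(m y)}) is negative for
y < ln(1-α)/(m·ln(1/2)) and positive for y > ln(1-α)/(m·ln(1/2)). -/
theorem stmt3 (α N : ℝ) (m : ℕ) (hm : 1 ≤ m) (hα : α ∈ Set.Ioo (0:ℝ) 1) (hN : 0 < N)
    (f : ℝ → ℝ)
    (hf : ∀ y, f y = -(N * y) / Real.log (1 - (1 - α) ^ (1 / ((m : ℝ) * y)))) :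
    (∀ y, 0 < y → y < Real.log (1 - α) / ((m : ℝ) * Real.log (1 / 2)) →
        deriv f y < 0) ∧
    (∀ y, Real.log (1 - α) / ((m : ℝ) * Real.log (1 / 2)) < y →
        0 < deriv f y) := by
  obtain ⟨hα0, hα1⟩ := hα
  have hM : (0:ℝ) < (m:ℝ) := by exact_mod_cast Nat.cast_pos.mpr hm
  have h1α : (0:ℝ) < 1 - α := by linarith
  have h1α1 : 1 - α < 1 := by linarith
  have hc : Real.log (1-α) < 0 := Real.log_neg h1α h1α1
  have hL : Real.log ((1:ℝ)/2) < 0 := Real.log_neg (by norm_num) (by norm_num)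
  have hML : (m:ℝ) * Real.log (1/2) < 0 := mul_neg_of_pos_of_neg hM hL
  have key : ∀ y : ℝ, 0 < y →
      deriv f y = -N * ((1 - (1-α)^(1/((m:ℝ)*y))) * Real.log (1 - (1-α)^(1/((m:ℝ)*y)))
        - (1-α)^(1/((m:ℝ)*y)) * Real.log ((1-α)^(1/((m:ℝ)*y))))
        / ((1 - (1-α)^(1/((m:ℝ)*y))) * (Real.log (1 - (1-α)^(1/((m:ℝ)*y))))^2) := by
    intro y hy
    set u : ℝ := (1-α)^(1/((m:ℝ)*y)) with hu
    have hMy : 0 < (m:ℝ)*y := mul_pos hM hy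
    have hupos : 0 < u := Real.rpow_pos_of_pos h1α _
    have hult : u < 1 := Real.rpow_lt_one h1α.le h1α1 (by positivity)
    have h1u : 0 < 1 - u := by linarith
    have h1u' : (1:ℝ) - u ≠ 0 := h1u.ne'
    have hlog1u : Real.log (1-u) < 0 := Real.log_neg h1u (by linarith)
    have hlogu : Real.log u = (1/((m:ℝ)*y)) * Real.log (1-α) := by
      rw [hu, Real.log_rpow h1α]
    have hq : HasDerivAt (fun t : ℝ => 1/((m:ℝ)*t)) (-(m:ℝ)/((m:ℝ)*y)^2) y := by
      have h := ((hasDerivAt_id y).const_mul (m:ℝ)).inv hMy.ne'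
      simp only [one_div, mul_one] at h ⊢
      exact h
    have hu' : HasDerivAt (fun t : ℝ => (1-α)^(1/((m:ℝ)*t)))
        ((-(m:ℝ)/((m:ℝ)*y)^2) * u * Real.log (1-α)) y := by
      have h := (hasDerivAt_const y (1-α)).rpow hq h1α
      convert h using 1
      rw [hu]; ring
    have hg : HasDerivAt (fun t : ℝ => Real.log (1 - (1-α)^(1/((m:ℝ)*t))))
        ((-((-(m:ℝ)/((m:ℝ)*y)^2) * u * Real.log (1-α)))/(1-u)) y := by
      have h := (hu'.const_sub 1).log (show (1:ℝ) - (1-α)^(1/((m:ℝ)*y)) ≠ 0 from by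
        rw [← hu]; exact h1u')
      rw [← hu] at h
      exact h
    have hnum : HasDerivAt (fun t : ℝ => -(N*t)) (-N) y := by
      simpa [Pi.neg_def] using ((hasDerivAt_id y).const_mul N).neg
    have hfy := hnum.div hg (show Real.log (1 - (1-α)^(1/((m:ℝ)*y))) ≠ 0 from by
      rw [← hu]; exact hlog1u.ne)
    rw [← hu] at hfy
    have hfe : f = fun t => -(N*t) / Real.log (1 - (1-α)^(1/((m:ℝ)*t))) := funext hf
    rw [hfe, show (fun t => -(N*t) / Real.log (1 - (1-α)^(1/((m:ℝ)*t)))) =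
      (fun t => -(N*t)) / (fun t => Real.log (1 - (1-α)^(1/((m:ℝ)*t)))) from rfl, hfy.deriv, hlogu]
    have hy' : y ≠ 0 := hy.ne'
    have hm' : (m:ℝ) ≠ 0 := hM.ne'
    rw [div_eq_div_iff (pow_ne_zero 2 hlog1u.ne) (mul_ne_zero h1u' (pow_ne_zero 2 hlog1u.ne))]
    field_simp
    ring
  constructor
  · intro y hy hlt
    rw [key y hy]
    set u : ℝ := (1-α)^(1/((m:ℝ)*y)) with hu
    have hMy : 0 < (m:ℝ)*y := mul_pos hM hy
    have hupos : 0 < u := Real.rpow_pos_of_pos h1α _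
    have hlogu : Real.log u = (1/((m:ℝ)*y)) * Real.log (1-α) := by
      rw [hu, Real.log_rpow h1α]
    have hu2 : u < 1/2 := by
      have h1 : Real.log (1-α) < y * ((m:ℝ) * Real.log (1/2)) :=
        (lt_div_iff_of_neg hML).mp hlt
      have h2 : Real.log u < Real.log (1/2:ℝ) := by
        rw [hlogu, show (1/((m:ℝ)*y)) * Real.log (1-α) = Real.log (1-α)/((m:ℝ)*y) by ring,
          div_lt_iff₀ hMy]
        nlinarith [h1]
      calc u = Real.exp (Real.log u) := (Real.exp_log hupos).symm
        _ < Real.exp (Real.log (1/2:ℝ)) := Real.exp_lt_exp.mpr h2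
        _ = 1/2 := Real.exp_log (by norm_num)
    have h1u : 0 < 1 - u := by linarith
    have hlog1u : Real.log (1-u) < 0 := Real.log_neg h1u (by linarith)
    have hpos := entropy_pos u ⟨hupos, hu2⟩
    apply div_neg_of_neg_of_pos
    · exact mul_neg_of_neg_of_pos (neg_lt_zero.mpr hN) hpos
    · have : (0:ℝ) < (Real.log (1-u))^2 := by
        have := hlog1u.ne
        positivity
      exact mul_pos h1u this
  · intro y hlt
    have hystar : 0 < Real.log (1-α) / ((m:ℝ) * Real.log (1/2)) :=
      div_pos_of_neg_of_neg hc hML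
    have hy : 0 < y := hystar.trans hlt
    rw [key y hy]
    set u : ℝ := (1-α)^(1/((m:ℝ)*y)) with hu
    have hMy : 0 < (m:ℝ)*y := mul_pos hM hy
    have hupos : 0 < u := Real.rpow_pos_of_pos h1α _
    have hult : u < 1 := Real.rpow_lt_one h1α.le h1α1 (by positivity)
    have hlogu : Real.log u = (1/((m:ℝ)*y)) * Real.log (1-α) := by
      rw [hu, Real.log_rpow h1α]
    have hu2 : 1/2 < u := by
      have h1 : y * ((m:ℝ) * Real.log (1/2)) < Real.log (1-α) :=
        (div_lt_iff_of_neg hML).mp hlt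
      have h2 : Real.log (1/2:ℝ) < Real.log u := by
        rw [hlogu, show (1/((m:ℝ)*y)) * Real.log (1-α) = Real.log (1-α)/((m:ℝ)*y) by ring,
          lt_div_iff₀ hMy]
        nlinarith [h1]
      calc (1/2:ℝ) = Real.exp (Real.log (1/2:ℝ)) := (Real.exp_log (by norm_num)).symm
        _ < Real.exp (Real.log u) := Real.exp_lt_exp.mpr h2
        _ = u := Real.exp_log hupos
    have h1u : 0 < 1 - u := by linarith
    have hlog1u : Real.log (1-u) < 0 := Real.log_neg h1u (by linarith)
    have hneg := entropy_neg u ⟨hu2, hult⟩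
    apply div_pos
    · exact mul_pos_of_neg_of_neg (neg_lt_zero.mpr hN) hneg
    · have : (0:ℝ) < (Real.log (1-u))^2 := by
        have := hlog1u.ne
        positivity
      exact mul_pos h1u this
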